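/- Let E₁ and E₂ be spectral measures on Hilbert spaces, and let Φ(x, y) = Σ_{n≥0} φₙ(x)ψₙ(y), where the φₙ are bounded measurable functions with Σ|φₙ|² ≤ a² pointwise and the ψₙ are bounded measurable functions with Σ|ψₙ|² ≤ b² pointwise. Then for every bounded operator Q, the series Σ_{n≥0} (∫ φₙ dE₁) Q (∫ ψₙ dE₂) converges in the weak operator topology to a bounded operator T with ‖T‖ ≤ a·b·‖Q‖. -/

import Mathlib

open scoped InnerProductSpace

/-- A projection-valued spectral measure on a measurable space `(α, 𝔄)`, acting on a
complex Hilbert space `H`, bundled together with its bounded Borel functional calculus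
`integral φ = ∫ φ dE`. -/
structure SpectralMeasure (α : Type*) [MeasurableSpace α]
    (H : Type*) [NormedAddCommGroup H] [InnerProductSpace ℂ H] [CompleteSpace H] where
  /-- the projection `E(s)` associated with a measurable set `s` -/
  proj : Set α → H →L[ℂ] H
  proj_idem : ∀ s, MeasurableSet s → (proj s).comp (proj s) = proj s
  proj_selfAdjoint : ∀ s, MeasurableSet s →
    ∀ x y : H, ⟪proj s x, y⟫_ℂ = ⟪x, proj s y⟫_ℂ
  proj_univ : proj Set.univ = ContinuousLinearMap.id ℂ H
  proj_inter : ∀ s t, MeasurableSet s → MeasurableSet t →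
    proj (s ∩ t) = (proj s).comp (proj t)
  proj_countablyAdditive : ∀ s : ℕ → Set α, (∀ n, MeasurableSet (s n)) →
    Pairwise (Function.onFun Disjoint s) →
    ∀ x : H, HasSum (fun n => proj (s n) x) (proj (⋃ n, s n) x)
  /-- the functional calculus `φ ↦ ∫ φ dE` for bounded measurable `φ` -/
  integral : (α → ℂ) → H →L[ℂ] H
  integral_indicator : ∀ s : Set α, MeasurableSet s →
    integral (s.indicator fun _ => 1) = proj s
  integral_add : ∀ φ ψ : α → ℂ, Measurable φ → Measurable ψ →
    integral (φ + ψ) = integral φ + integral ψ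
  integral_smul : ∀ (c : ℂ) (φ : α → ℂ), integral (c • φ) = c • integral φ
  integral_mul : ∀ φ ψ : α → ℂ, Measurable φ → Measurable ψ →
    integral (φ * ψ) = (integral φ).comp (integral ψ)
  integral_norm_le : ∀ (φ : α → ℂ) (M : ℝ), (∀ a, ‖φ a‖ ≤ M) → ‖integral φ‖ ≤ M

set_option linter.unusedSectionVars false

namespace SpectralMeasure

variable {α : Type*} [MeasurableSpace α] {H : Type*} [NormedAddCommGroup H]
  [InnerProductSpace ℂ H] [CompleteSpace H] (E : SpectralMeasure α H)


lemma integral_zero : E.integral 0 = 0 := by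
  have h := E.integral_smul 0 0
  simpa using h

lemma integral_sub (φ ψ : α → ℂ) (hφ : Measurable φ) (hψ : Measurable ψ) :
    E.integral (φ - ψ) = E.integral φ - E.integral ψ := by
  have h1 : φ - ψ = φ + (-1 : ℂ) • ψ := by funext x; simp [sub_eq_add_neg]
  rw [h1, E.integral_add φ ((-1 : ℂ) • ψ) hφ (hψ.const_smul _), E.integral_smul]
  simp [sub_eq_add_neg]

lemma norm_integral_sub_le (φ ψ : α → ℂ) (hφ : Measurable φ) (hψ : Measurable ψ)
    (M : ℝ) (h : ∀ x, ‖φ x - ψ x‖ ≤ M) :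
    ‖E.integral φ - E.integral ψ‖ ≤ M := by
  rw [← E.integral_sub φ ψ hφ hψ]
  exact E.integral_norm_le _ M (fun x => h x)


lemma indicator_const_eq (s : Set α) (c : ℂ) :
    (s.indicator fun _ => c) = c • (s.indicator fun _ => (1 : ℂ)) := by
  funext x
  by_cases h : x ∈ s <;> simp [Set.indicator, h]

lemma measurable_sfun (k : ℕ) (c : ℕ → ℂ) (s : ℕ → Set α) (hs : ∀ n, MeasurableSet (s n)) :
    Measurable (fun x => ∑ n ∈ Finset.range k, (s n).indicator (fun _ => c n) x) := by
  apply Finset.measurable_sum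
  intro n _
  exact Measurable.indicator measurable_const (hs n)

lemma integral_sfun (k : ℕ) (c : ℕ → ℂ) (s : ℕ → Set α) (hs : ∀ n, MeasurableSet (s n)) :
    E.integral (fun x => ∑ n ∈ Finset.range k, (s n).indicator (fun _ => c n) x)
      = ∑ n ∈ Finset.range k, c n • E.proj (s n) := by
  induction k with
  | zero => simp; exact E.integral_zero
  | succ k ih =>
      have hsplit : (fun x => ∑ n ∈ Finset.range (k+1), (s n).indicator (fun _ => c n) x)
          = (fun x => ∑ n ∈ Finset.range k, (s n).indicator (fun _ => c n) x)
            + ((s k).indicator fun _ => c k) := by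
        funext x; simp [Finset.sum_range_succ]
      rw [hsplit, E.integral_add _ _ (measurable_sfun k c s hs)
            (Measurable.indicator measurable_const (hs k)), ih,
          indicator_const_eq, E.integral_smul, E.integral_indicator _ (hs k),
          Finset.sum_range_succ]

lemma adjoint_sfun (k : ℕ) (c : ℕ → ℂ) (s : ℕ → Set α) (hs : ∀ n, MeasurableSet (s n))
    (u v : H) :
    ⟪E.integral (fun x => ∑ n ∈ Finset.range k, (s n).indicator (fun _ => c n) x) u, v⟫_ℂ
      = ⟪u, E.integral (fun x => ∑ n ∈ Finset.range k,
          (s n).indicator (fun _ => (starRingEnd ℂ) (c n)) x) v⟫_ℂ := by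
  rw [integral_sfun E k c s hs, integral_sfun E k _ s hs]
  rw [ContinuousLinearMap.sum_apply, ContinuousLinearMap.sum_apply, sum_inner, inner_sum]
  apply Finset.sum_congr rfl
  intro n _
  rw [ContinuousLinearMap.smul_apply, ContinuousLinearMap.smul_apply,
      inner_smul_left, inner_smul_right, E.proj_selfAdjoint _ (hs n)]

lemma exists_sfun_approx (φ : α → ℂ) (hm : Measurable φ) (M : ℝ) (hM : ∀ x, ‖φ x‖ ≤ M)
    (ε : ℝ) (hε : 0 < ε) :
    ∃ (k : ℕ) (c : ℕ → ℂ) (s : ℕ → Set α), (∀ n, MeasurableSet (s n)) ∧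
      ∀ x, ‖φ x - ∑ n ∈ Finset.range k, (s n).indicator (fun _ => c n) x‖ ≤ ε := by
  have hcpt : IsCompact (Metric.closedBall (0 : ℂ) M) := isCompact_closedBall _ _
  obtain ⟨t, ht⟩ := hcpt.elim_finite_subcover (fun z : ℂ => Metric.ball z ε)
    (fun z => Metric.isOpen_ball)
    (fun z hz => Set.mem_iUnion.2 ⟨z, Metric.mem_ball_self hε⟩)
  classical
  set l := t.toList with hl
  set k := l.length with hk
  set e : ℕ → ℂ := fun n => l.getD n 0 with he
  set A : ℕ → Set α := fun n => if n < k then φ ⁻¹' (Metric.ball (e n) ε) else ∅ with hA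
  have hAm : ∀ n, MeasurableSet (A n) := by
    intro n
    by_cases h : n < k <;> simp only [hA, h, if_true, if_false]
    · exact hm measurableSet_ball
    · exact MeasurableSet.empty
  set s : ℕ → Set α := disjointed A with hs
  have hsm : ∀ n, MeasurableSet (s n) := MeasurableSet.disjointed hAm
  refine ⟨k, e, s, hsm, ?_⟩
  intro x
  -- x belongs to some s m
  have hx : ∃ m, x ∈ s m := by
    have h1 : φ x ∈ Metric.closedBall (0 : ℂ) M := by
      simpa [Metric.mem_closedBall, dist_zero_right] using hM x
    obtain ⟨z, hzt, hz⟩ := Set.mem_iUnion₂.1 (ht h1)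
    have hzl : z ∈ l := Finset.mem_toList.2 hzt
    obtain ⟨n, hn, hnz⟩ := List.mem_iff_getElem.1 hzl
    have hxA : x ∈ A n := by
      simp only [hA, hn, if_true]
      have : e n = z := (List.getD_eq_getElem l 0 hn).trans hnz
      simp [Set.mem_preimage, this]; exact ⟨hn, Metric.mem_ball.1 hz⟩
    have : x ∈ ⋃ n, s n := by
      rw [hs, iUnion_disjointed]
      exact Set.mem_iUnion.2 ⟨n, hxA⟩
    exact Set.mem_iUnion.1 this
  obtain ⟨m, hmx⟩ := hx
  have hmA : x ∈ A m := disjointed_subset A m hmx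
  have hmk : m < k := by
    by_contra h
    simp [hA, h] at hmA
  have hsum : ∑ n ∈ Finset.range k, (s n).indicator (fun _ => e n) x = e m := by
    rw [Finset.sum_eq_single_of_mem m (Finset.mem_range.2 hmk)]
    · simp [Set.indicator_of_mem hmx]
    · intro n _ hnm
      have hd : Disjoint (s n) (s m) := disjoint_disjointed A hnm
      have : x ∉ s n := fun hxn => (Set.disjoint_left.1 hd hxn) hmx
      simp [Set.indicator_of_notMem this]
  rw [hsum]
  have : φ x ∈ Metric.ball (e m) ε := by
    simpa [hA, hmk] using hmA
  have := Metric.mem_ball.1 this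
  rw [dist_eq_norm] at this
  exact le_of_lt this

lemma inner_integral_adjoint (φ : α → ℂ) (hm : Measurable φ) (M : ℝ) (hM : ∀ x, ‖φ x‖ ≤ M)
    (u v : H) :
    ⟪E.integral φ u, v⟫_ℂ = ⟪u, E.integral (fun x => (starRingEnd ℂ) (φ x)) v⟫_ℂ := by
  have hmc : Measurable fun x => (starRingEnd ℂ) (φ x) := Complex.continuous_conj.measurable.comp hm
  apply eq_of_forall_dist_le
  intro ε hε
  set C : ℝ := ‖u‖ * ‖v‖ + 1 with hC
  have hC0 : 0 < C := by positivity
  have huv : ‖u‖ * ‖v‖ ≤ C := by simp [hC]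
  set ε' : ℝ := ε / (2 * C) with hε'def
  have hε' : 0 < ε' := by positivity
  obtain ⟨k, c, s, hs, happ⟩ := exists_sfun_approx φ hm M hM ε' hε'
  set f : α → ℂ := fun x => ∑ n ∈ Finset.range k, (s n).indicator (fun _ => c n) x with hf
  set g : α → ℂ := fun x => ∑ n ∈ Finset.range k,
      (s n).indicator (fun _ => (starRingEnd ℂ) (c n)) x with hg
  have hfm : Measurable f := measurable_sfun k c s hs
  have hgm : Measurable g := measurable_sfun k _ s hs
  have hgapp : ∀ x, ‖(starRingEnd ℂ) (φ x) - g x‖ ≤ ε' := by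
    intro x
    have : (starRingEnd ℂ) (φ x) - g x = (starRingEnd ℂ) (φ x - f x) := by
      rw [map_sub]
      congr 1
      rw [hg, hf, map_sum]
      apply Finset.sum_congr rfl
      intro n _
      by_cases h : x ∈ s n <;> simp [Set.indicator, h]
    rw [this, RCLike.norm_conj]
    exact happ x
  have key : ⟪E.integral f u, v⟫_ℂ = ⟪u, E.integral g v⟫_ℂ := adjoint_sfun E k c s hs u v
  have h1 : ‖⟪E.integral φ u, v⟫_ℂ - ⟪E.integral f u, v⟫_ℂ‖ ≤ ε' * (‖u‖ * ‖v‖) := by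
    rw [← inner_sub_left]
    have : E.integral φ u - E.integral f u = (E.integral φ - E.integral f) u := by simp
    rw [this]
    calc ‖⟪(E.integral φ - E.integral f) u, v⟫_ℂ‖
        ≤ ‖(E.integral φ - E.integral f) u‖ * ‖v‖ := norm_inner_le_norm _ _
      _ ≤ (‖E.integral φ - E.integral f‖ * ‖u‖) * ‖v‖ := by
          gcongr; exact (E.integral φ - E.integral f).le_opNorm u
      _ ≤ (ε' * ‖u‖) * ‖v‖ := by
          gcongr; exact E.norm_integral_sub_le φ f hm hfm ε' happ
      _ = ε' * (‖u‖ * ‖v‖) := by ring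
  have h2 : ‖⟪u, E.integral (fun x => (starRingEnd ℂ) (φ x)) v⟫_ℂ - ⟪u, E.integral g v⟫_ℂ‖
      ≤ ε' * (‖u‖ * ‖v‖) := by
    rw [← inner_sub_right]
    have : E.integral (fun x => (starRingEnd ℂ) (φ x)) v - E.integral g v
        = (E.integral (fun x => (starRingEnd ℂ) (φ x)) - E.integral g) v := by simp
    rw [this]
    calc ‖⟪u, (E.integral (fun x => (starRingEnd ℂ) (φ x)) - E.integral g) v⟫_ℂ‖
        ≤ ‖u‖ * ‖(E.integral (fun x => (starRingEnd ℂ) (φ x)) - E.integral g) v‖ :=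
          norm_inner_le_norm _ _
      _ ≤ ‖u‖ * (‖E.integral (fun x => (starRingEnd ℂ) (φ x)) - E.integral g‖ * ‖v‖) := by
          gcongr
          exact (E.integral (fun x => (starRingEnd ℂ) (φ x)) - E.integral g).le_opNorm v
      _ ≤ ‖u‖ * (ε' * ‖v‖) := by
          gcongr
          exact E.norm_integral_sub_le _ g hmc hgm ε' hgapp
      _ = ε' * (‖u‖ * ‖v‖) := by ring
  rw [dist_eq_norm]
  calc ‖⟪E.integral φ u, v⟫_ℂ - ⟪u, E.integral (fun x => (starRingEnd ℂ) (φ x)) v⟫_ℂ‖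
      = ‖(⟪E.integral φ u, v⟫_ℂ - ⟪E.integral f u, v⟫_ℂ)
          - (⟪u, E.integral (fun x => (starRingEnd ℂ) (φ x)) v⟫_ℂ - ⟪u, E.integral g v⟫_ℂ)‖ := by
        rw [key]; ring_nf
    _ ≤ ‖⟪E.integral φ u, v⟫_ℂ - ⟪E.integral f u, v⟫_ℂ‖
        + ‖⟪u, E.integral (fun x => (starRingEnd ℂ) (φ x)) v⟫_ℂ - ⟪u, E.integral g v⟫_ℂ‖ :=
        norm_sub_le _ _
    _ ≤ ε' * (‖u‖ * ‖v‖) + ε' * (‖u‖ * ‖v‖) := add_le_add h1 h2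
    _ = 2 * ε' * (‖u‖ * ‖v‖) := by ring
    _ ≤ 2 * ε' * C := by
        have h2ε : (0:ℝ) ≤ 2 * ε' := by positivity
        exact mul_le_mul_of_nonneg_left huv h2ε
    _ = ε := by
        rw [hε'def]; field_simp

lemma integral_finset_sum (N : ℕ) (f : ℕ → α → ℂ) (hf : ∀ n, Measurable (f n)) :
    E.integral (fun x => ∑ n ∈ Finset.range N, f n x)
      = ∑ n ∈ Finset.range N, E.integral (f n) := by
  induction N with
  | zero => simp; exact E.integral_zero
  | succ N ih =>
      have hsplit : (fun x => ∑ n ∈ Finset.range (N+1), f n x)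
          = (fun x => ∑ n ∈ Finset.range N, f n x) + f N := by
        funext x; simp [Finset.sum_range_succ]
      rw [hsplit, E.integral_add _ _ (Finset.measurable_sum _ (fun n _ => hf n)) (hf N), ih,
        Finset.sum_range_succ]

lemma norm_integral_apply_sq (ψ : α → ℂ) (hm : Measurable ψ) (M : ℝ) (hM : ∀ x, ‖ψ x‖ ≤ M)
    (u : H) :
    ((‖E.integral ψ u‖ ^ 2 : ℝ) : ℂ)
      = ⟪u, E.integral (fun x => (starRingEnd ℂ) (ψ x) * ψ x) u⟫_ℂ := by
  have h := inner_integral_adjoint E ψ hm M hM u (E.integral ψ u)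
  have h2 : (fun x => (starRingEnd ℂ) (ψ x) * ψ x)
      = (fun x => (starRingEnd ℂ) (ψ x)) * ψ := rfl
  have hns : ⟪E.integral ψ u, E.integral ψ u⟫_ℂ = ((‖E.integral ψ u‖ ^ 2 : ℝ) : ℂ) := by
    rw [inner_self_eq_norm_sq_to_K]; norm_cast
  rw [← hns, h2, E.integral_mul (fun x => (starRingEnd ℂ) (ψ x)) ψ
    (Complex.continuous_conj.measurable.comp hm) hm]
  simpa using h

lemma sum_norm_integral_sq_le (ψ : ℕ → α → ℂ) (hm : ∀ n, Measurable (ψ n)) (b : ℝ)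
    (hb : ∀ x N, ∑ n ∈ Finset.range N, ‖ψ n x‖ ^ 2 ≤ b ^ 2) (u : H) (N : ℕ) :
    ∑ n ∈ Finset.range N, ‖E.integral (ψ n) u‖ ^ 2 ≤ b ^ 2 * ‖u‖ ^ 2 := by
  have hbd : ∀ n x, ‖ψ n x‖ ≤ |b| := by
    intro n x
    have h1 : ‖ψ n x‖ ^ 2 ≤ b ^ 2 := by
      calc ‖ψ n x‖ ^ 2 ≤ ∑ m ∈ Finset.range (n+1), ‖ψ m x‖ ^ 2 :=
            Finset.single_le_sum (f := fun m => ‖ψ m x‖ ^ 2)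
              (fun m _ => sq_nonneg _) (Finset.self_mem_range_succ n)
        _ ≤ b ^ 2 := hb x (n+1)
    have h2 : ‖ψ n x‖ ^ 2 ≤ |b| ^ 2 := by rwa [sq_abs]
    exact (abs_le_of_sq_le_sq' h2 (abs_nonneg b)).2
  -- g N is the partial sum function
  set g : α → ℂ := fun x => ∑ n ∈ Finset.range N, (starRingEnd ℂ) (ψ n x) * ψ n x with hg
  have hgm : Measurable g :=
    Finset.measurable_sum _ (fun n _ =>
      ((Complex.continuous_conj.measurable.comp (hm n)).mul (hm n)))
  have hgbd : ∀ x, ‖g x‖ ≤ b ^ 2 := by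
    intro x
    have hterm : ∀ z : ℂ, (starRingEnd ℂ) z * z = (‖z‖ : ℂ) ^ 2 := fun z => by
      rw [mul_comm, Complex.mul_conj]
      norm_cast
      rw [Complex.normSq_eq_norm_sq]
    have hx : g x = ((∑ n ∈ Finset.range N, ‖ψ n x‖ ^ 2 : ℝ) : ℂ) := by
      rw [hg]
      push_cast
      exact Finset.sum_congr rfl (fun n _ => hterm _)
    rw [hx, Complex.norm_real, Real.norm_eq_abs,
      abs_of_nonneg (Finset.sum_nonneg fun n _ => sq_nonneg _)]
    exact hb x N
  have hcast : ((∑ n ∈ Finset.range N, ‖E.integral (ψ n) u‖ ^ 2 : ℝ) : ℂ)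
      = ⟪u, E.integral g u⟫_ℂ := by
    rw [hg, integral_finset_sum E N (fun n x => (starRingEnd ℂ) (ψ n x) * ψ n x) (fun n =>
      ((Complex.continuous_conj.measurable.comp (hm n)).mul (hm n))),
      ContinuousLinearMap.sum_apply, inner_sum, Complex.ofReal_sum]
    apply Finset.sum_congr rfl
    intro n _
    exact norm_integral_apply_sq E (ψ n) (hm n) |b| (hbd n) u
  have hnn : 0 ≤ ∑ n ∈ Finset.range N, ‖E.integral (ψ n) u‖ ^ 2 :=
    Finset.sum_nonneg fun n _ => sq_nonneg _
  have : ∑ n ∈ Finset.range N, ‖E.integral (ψ n) u‖ ^ 2 = ‖⟪u, E.integral g u⟫_ℂ‖ := by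
    rw [← hcast, Complex.norm_real, Real.norm_eq_abs, abs_of_nonneg hnn]
  rw [this]
  calc ‖⟪u, E.integral g u⟫_ℂ‖ ≤ ‖u‖ * ‖E.integral g u‖ := norm_inner_le_norm _ _
    _ ≤ ‖u‖ * (‖E.integral g‖ * ‖u‖) := by gcongr; exact (E.integral g).le_opNorm u
    _ ≤ ‖u‖ * (b ^ 2 * ‖u‖) := by
        gcongr
        exact E.integral_norm_le g (b ^ 2) hgbd
    _ = b ^ 2 * ‖u‖ ^ 2 := by ring

end SpectralMeasure

/-- Let `E₁`, `E₂` be spectral measures on a Hilbert space and let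
`Φ(x,y) = Σₙ φₙ(x)ψₙ(y)` with `Σ|φₙ|² ≤ a²` and `Σ|ψₙ|² ≤ b²` pointwise (φₙ, ψₙ bounded
measurable). Then for every bounded operator `Q`, the series
`Σₙ (∫φₙ dE₁) Q (∫ψₙ dE₂)` converges in the weak operator topology to a bounded
operator `T` with `‖T‖ ≤ a·b·‖Q‖`. -/
theorem haagerup_doi_wot_convergence
    {X Y : Type*} [MeasurableSpace X] [MeasurableSpace Y]
    {H : Type*} [NormedAddCommGroup H] [InnerProductSpace ℂ H] [CompleteSpace H]
    (E₁ : SpectralMeasure X H) (E₂ : SpectralMeasure Y H)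
    (φ : ℕ → X → ℂ) (ψ : ℕ → Y → ℂ)
    (hφm : ∀ n, Measurable (φ n)) (hψm : ∀ n, Measurable (ψ n))
    (a b : ℝ) (ha : 0 ≤ a) (hb : 0 ≤ b)
    (hφ : ∀ x, ∃ S, HasSum (fun n => ‖φ n x‖ ^ 2) S ∧ S ≤ a ^ 2)
    (hψ : ∀ y, ∃ S, HasSum (fun n => ‖ψ n y‖ ^ 2) S ∧ S ≤ b ^ 2)
    (Q : H →L[ℂ] H) :
    ∃ T : H →L[ℂ] H, ‖T‖ ≤ a * b * ‖Q‖ ∧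
      ∀ u v : H,
        HasSum (fun n => ⟪(E₁.integral (φ n)) (Q ((E₂.integral (ψ n)) u)), v⟫_ℂ)
          ⟪T u, v⟫_ℂ := by
  classical
  -- partial-sum bounds
  have hφbd : ∀ x N, ∑ n ∈ Finset.range N, ‖φ n x‖ ^ 2 ≤ a ^ 2 := by
    intro x N
    obtain ⟨S, hS, hSa⟩ := hφ x
    exact le_trans (sum_le_hasSum _ (fun n _ => sq_nonneg _) hS) hSa
  have hψbd : ∀ y N, ∑ n ∈ Finset.range N, ‖ψ n y‖ ^ 2 ≤ b ^ 2 := by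
    intro y N
    obtain ⟨S, hS, hSb⟩ := hψ y
    exact le_trans (sum_le_hasSum _ (fun n _ => sq_nonneg _) hS) hSb
  have hφM : ∀ n x, ‖φ n x‖ ≤ |a| := by
    intro n x
    have h1 : ‖φ n x‖ ^ 2 ≤ a ^ 2 := by
      calc ‖φ n x‖ ^ 2 ≤ ∑ m ∈ Finset.range (n+1), ‖φ m x‖ ^ 2 :=
            Finset.single_le_sum (f := fun m => ‖φ m x‖ ^ 2)
              (fun m _ => sq_nonneg _) (Finset.self_mem_range_succ n)
        _ ≤ a ^ 2 := hφbd x (n+1)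
    have h2 : ‖φ n x‖ ^ 2 ≤ |a| ^ 2 := by rwa [sq_abs]
    exact (abs_le_of_sq_le_sq' h2 (abs_nonneg a)).2
  -- the summands
  set c : H → H → ℕ → ℂ :=
    fun u v n => ⟪(E₁.integral (φ n)) (Q ((E₂.integral (ψ n)) u)), v⟫_ℂ with hc
  -- conj φ side bound
  have hφconjm : ∀ n, Measurable fun x => (starRingEnd ℂ) (φ n x) :=
    fun n => Complex.continuous_conj.measurable.comp (hφm n)
  have hφconjbd : ∀ (v : H) (N : ℕ),
      ∑ n ∈ Finset.range N, ‖E₁.integral (fun x => (starRingEnd ℂ) (φ n x)) v‖ ^ 2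
        ≤ a ^ 2 * ‖v‖ ^ 2 := by
    intro v N
    apply SpectralMeasure.sum_norm_integral_sq_le E₁ _ hφconjm a _ v N
    intro x N'
    have : ∀ n, ‖(starRingEnd ℂ) (φ n x)‖ = ‖φ n x‖ := fun n => RCLike.norm_conj (φ n x)
    simp only [this]
    exact hφbd x N'
  have hψsq : ∀ (u : H) (N : ℕ),
      ∑ n ∈ Finset.range N, ‖E₂.integral (ψ n) u‖ ^ 2 ≤ b ^ 2 * ‖u‖ ^ 2 :=
    fun u N => SpectralMeasure.sum_norm_integral_sq_le E₂ ψ hψm b hψbd u N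
  -- adjoint identity for each summand
  have hadj : ∀ u v n,
      c u v n = ⟪Q ((E₂.integral (ψ n)) u),
        E₁.integral (fun x => (starRingEnd ℂ) (φ n x)) v⟫_ℂ :=
    fun u v n => SpectralMeasure.inner_integral_adjoint E₁ (φ n) (hφm n) |a| (hφM n) _ v
  -- key partial-sum estimate on norms
  have hkey : ∀ u v N, ∑ n ∈ Finset.range N, ‖c u v n‖
      ≤ ‖Q‖ * (a * b * (‖u‖ * ‖v‖)) := by
    intro u v N
    set f : ℕ → ℝ := fun n => ‖E₂.integral (ψ n) u‖ with hf
    set g : ℕ → ℝ := fun n => ‖E₁.integral (fun x => (starRingEnd ℂ) (φ n x)) v‖ with hgdef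
    have hterm : ∀ n, ‖c u v n‖ ≤ ‖Q‖ * (f n * g n) := by
      intro n
      rw [hadj u v n]
      calc ‖⟪Q ((E₂.integral (ψ n)) u),
            E₁.integral (fun x => (starRingEnd ℂ) (φ n x)) v⟫_ℂ‖
          ≤ ‖Q ((E₂.integral (ψ n)) u)‖ * g n :=
            norm_inner_le_norm (𝕜 := ℂ) (Q ((E₂.integral (ψ n)) u))
              ((E₁.integral fun x => (starRingEnd ℂ) (φ n x)) v)
        _ ≤ (‖Q‖ * f n) * g n :=
            mul_le_mul_of_nonneg_right (Q.le_opNorm _) (norm_nonneg _)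
        _ = ‖Q‖ * (f n * g n) := by ring
    have hfg : ∑ n ∈ Finset.range N, f n * g n ≤ a * b * (‖u‖ * ‖v‖) := by
      have hsq : (∑ n ∈ Finset.range N, f n * g n) ^ 2
          ≤ (∑ n ∈ Finset.range N, f n ^ 2) * (∑ n ∈ Finset.range N, g n ^ 2) :=
        Finset.sum_mul_sq_le_sq_mul_sq _ _ _
      have h2 : (∑ n ∈ Finset.range N, f n ^ 2) * (∑ n ∈ Finset.range N, g n ^ 2)
          ≤ (b ^ 2 * ‖u‖ ^ 2) * (a ^ 2 * ‖v‖ ^ 2) := by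
        apply mul_le_mul (hψsq u N) (hφconjbd v N)
          (Finset.sum_nonneg fun n _ => sq_nonneg _)
        positivity
      have h3 : (∑ n ∈ Finset.range N, f n * g n) ^ 2
          ≤ (a * b * (‖u‖ * ‖v‖)) ^ 2 := by
        calc (∑ n ∈ Finset.range N, f n * g n) ^ 2
            ≤ (b ^ 2 * ‖u‖ ^ 2) * (a ^ 2 * ‖v‖ ^ 2) := le_trans hsq h2
          _ = (a * b * (‖u‖ * ‖v‖)) ^ 2 := by ring
      exact (abs_le_of_sq_le_sq' h3 (by positivity)).2
    calc ∑ n ∈ Finset.range N, ‖c u v n‖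
        ≤ ∑ n ∈ Finset.range N, ‖Q‖ * (f n * g n) := Finset.sum_le_sum fun n _ => hterm n
      _ = ‖Q‖ * ∑ n ∈ Finset.range N, f n * g n := by rw [Finset.mul_sum]
      _ ≤ ‖Q‖ * (a * b * (‖u‖ * ‖v‖)) := by
          exact mul_le_mul_of_nonneg_left hfg (norm_nonneg Q)
  -- summability
  have hsum : ∀ u v, Summable (c u v) := by
    intro u v
    apply Summable.of_norm
    exact summable_of_sum_range_le (fun n => norm_nonneg _) (fun N => hkey u v N)
  have hB : ∀ u v, ‖∑' n, c u v n‖ ≤ a * b * ‖Q‖ * ‖u‖ * ‖v‖ := by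
    intro u v
    calc ‖∑' n, c u v n‖ ≤ ∑' n, ‖c u v n‖ := norm_tsum_le_tsum_norm ((hsum u v).norm)
      _ ≤ ‖Q‖ * (a * b * (‖u‖ * ‖v‖)) :=
          Real.tsum_le_of_sum_range_le (fun n => norm_nonneg _) (fun N => hkey u v N)
      _ = a * b * ‖Q‖ * ‖u‖ * ‖v‖ := by ring
  -- the functional v ↦ ∑' n, c u v n
  have hadd_v : ∀ u v w, (fun n => c u (v + w) n) = fun n => c u v n + c u w n := by
    intro u v w; funext n; simp [hc, inner_add_right]
  have hsmul_v : ∀ (u : H) (r : ℂ) (v : H),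
      (fun n => c u (r • v) n) = fun n => r * c u v n := by
    intro u r v; funext n; simp [hc, inner_smul_right]
  set L : H → H →L[ℂ] ℂ := fun u =>
    LinearMap.mkContinuous
      { toFun := fun v => ∑' n, c u v n
        map_add' := fun v w => by
          show (∑' n, c u (v + w) n) = (∑' n, c u v n) + ∑' n, c u w n
          rw [hadd_v u v w]
          exact Summable.tsum_add (hsum u v) (hsum u w)
        map_smul' := fun r v => by
          show (∑' n, c u (r • v) n) = (RingHom.id ℂ) r • ∑' n, c u v n
          rw [hsmul_v u r v, tsum_mul_left]
          simp }
      (a * b * ‖Q‖ * ‖u‖)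
      (fun v => hB u v) with hL
  have hLapply : ∀ u v, L u v = ∑' n, c u v n := fun u v => rfl
  have hLnorm : ∀ u, ‖L u‖ ≤ a * b * ‖Q‖ * ‖u‖ := by
    intro u
    apply LinearMap.mkContinuous_norm_le _ (by positivity)
  set T₀ : H → H := fun u => (InnerProductSpace.toDual ℂ H).symm (L u) with hT₀
  have hT₀inner : ∀ u v, ⟪T₀ u, v⟫_ℂ = ∑' n, c u v n := by
    intro u v
    rw [hT₀]
    exact InnerProductSpace.toDual_symm_apply
  have hT₀norm : ∀ u, ‖T₀ u‖ ≤ a * b * ‖Q‖ * ‖u‖ := by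
    intro u
    rw [hT₀]
    simpa using hLnorm u
  -- linearity of T₀
  have hcu_add : ∀ u w v n, c (u + w) v n = c u v n + c w v n := by
    intro u w v n; simp [hc, inner_add_left]
  have hcu_smul : ∀ (r : ℂ) u v n, c (r • u) v n = (starRingEnd ℂ) r * c u v n := by
    intro r u v n
    simp [hc, inner_smul_left]; ring
  have hT₀add : ∀ u w, T₀ (u + w) = T₀ u + T₀ w := by
    intro u w
    apply ext_inner_right ℂ
    intro v
    rw [hT₀inner, inner_add_left, hT₀inner, hT₀inner]
    have : (fun n => c (u + w) v n) = fun n => c u v n + c w v n := by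
      funext n; exact hcu_add u w v n
    rw [this]
    exact Summable.tsum_add (hsum u v) (hsum w v)
  have hT₀smul : ∀ (r : ℂ) u, T₀ (r • u) = r • T₀ u := by
    intro r u
    apply ext_inner_right ℂ
    intro v
    rw [hT₀inner, inner_smul_left, hT₀inner]
    have : (fun n => c (r • u) v n) = fun n => (starRingEnd ℂ) r * c u v n := by
      funext n; exact hcu_smul r u v n
    rw [this, tsum_mul_left]
  set T : H →L[ℂ] H :=
    LinearMap.mkContinuous
      { toFun := T₀
        map_add' := hT₀add
        map_smul' := hT₀smul }
      (a * b * ‖Q‖)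
      (fun u => by simpa [mul_assoc] using hT₀norm u) with hT
  refine ⟨T, ?_, ?_⟩
  · exact LinearMap.mkContinuous_norm_le _ (by positivity) _
  · intro u v
    have hTu : ⟪T u, v⟫_ℂ = ∑' n, c u v n := hT₀inner u v
    rw [hTu]
    exact (hsum u v).hasSum
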